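/- Let Λ be an additive subgroup of ℝ⁴ that is discrete (as a subspace of ℝ⁴) and such that every nonzero element v ∈ Λ is spacelike for the Minkowski form, i.e., Q(v) = v₁² + v₂² + v₃² − v₄² > 0. Then Λ is a free abelian group of rank k for some k ∈ {0, 1, 2, 3}; in particular Λ cannot have rank 4. -/

import Mathlib

/-- The Minkowski quadratic form `Q(v) = v₁² + v₂² + v₃² - v₄²` on `ℝ⁴`. -/
noncomputable def minkQ (v : EuclideanSpace ℝ (Fin 4)) : ℝ :=
  v 0 ^ 2 + v 1 ^ 2 + v 2 ^ 2 - v 3 ^ 2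

lemma minkQ_smul (c : ℝ) (v : EuclideanSpace ℝ (Fin 4)) :
    minkQ (c • v) = c ^ 2 * minkQ v := by
  simp only [minkQ, PiLp.smul_apply, smul_eq_mul]
  ring

lemma minkQ_continuous : Continuous minkQ := by
  have h : ∀ i : Fin 4, Continuous fun v : EuclideanSpace ℝ (Fin 4) => v i := by
    intro i
    exact (continuous_apply i).comp (PiLp.continuous_ofLp 2 _)
  exact ((((h 0).pow 2).add ((h 1).pow 2)).add ((h 2).pow 2)).sub ((h 3).pow 2)

/-- If the (real) span of a discrete spacelike subgroup were everything, we get a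
contradiction: the Minkowski form would be nonnegative everywhere. -/
lemma span_ne_top (Λ : AddSubgroup (EuclideanSpace ℝ (Fin 4)))
    (hspace : ∀ v ∈ Λ, v ≠ 0 → minkQ v > 0) :
    Submodule.span ℝ (Λ : Set (EuclideanSpace ℝ (Fin 4))) ≠ ⊤ := by
  intro htop
  set E := EuclideanSpace ℝ (Fin 4)
  set R : Set E := {x | ∃ n : ℕ, 0 < n ∧ (n : ℝ) • x ∈ Λ} with hR
  have hR0 : (0 : E) ∈ R := ⟨1, one_pos, by simpa using Λ.zero_mem⟩
  have hRΛ : (Λ : Set E) ⊆ R := fun x hx => ⟨1, one_pos, by simpa using hx⟩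
  have hRadd : ∀ x ∈ R, ∀ y ∈ R, x + y ∈ R := by
    rintro x ⟨n, hn, hx⟩ y ⟨m, hm, hy⟩
    refine ⟨n * m, Nat.mul_pos hn hm, ?_⟩
    have hx' : n • x ∈ Λ := by rwa [Nat.cast_smul_eq_nsmul] at hx
    have hy' : m • y ∈ Λ := by rwa [Nat.cast_smul_eq_nsmul] at hy
    rw [Nat.cast_smul_eq_nsmul, smul_add]
    refine Λ.add_mem ?_ ?_
    · rw [mul_comm, mul_smul]; exact Λ.nsmul_mem hx' m
    · rw [mul_smul]; exact Λ.nsmul_mem hy' n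
  have hRq : ∀ (q : ℚ), ∀ x ∈ R, (q : ℝ) • x ∈ R := by
    rintro q x ⟨n, hn, hx⟩
    refine ⟨n * q.den, Nat.mul_pos hn q.pos, ?_⟩
    have hden : ((q.den : ℝ)) * (q : ℝ) = (q.num : ℝ) := by
      exact_mod_cast congrArg (fun t : ℚ => (t : ℝ)) (Rat.den_mul_eq_num q)
    have : ((n * q.den : ℕ) : ℝ) • ((q : ℝ) • x) = (q.num : ℝ) • ((n : ℝ) • x) := by
      push_cast
      rw [smul_smul, smul_smul, ← hden]
      ring_nf
    rw [this, Int.cast_smul_eq_zsmul]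
    exact Λ.zsmul_mem hx q.num
  have hQR : ∀ x ∈ R, 0 ≤ minkQ x := by
    rintro x ⟨n, hn, hx⟩
    rcases eq_or_ne x 0 with rfl | hx0
    · have hz : ∀ i : Fin 4, (0 : EuclideanSpace ℝ (Fin 4)) i = 0 := fun i => rfl
      simp [minkQ, hz]
    · have hne : (n : ℝ) • x ≠ 0 :=
        smul_ne_zero (Nat.cast_ne_zero.mpr hn.ne') hx0
      have := hspace _ hx hne
      rw [minkQ_smul] at this
      nlinarith [sq_nonneg (n : ℝ)]
  set C : Set E := closure R with hC
  have hQC : ∀ x ∈ C, 0 ≤ minkQ x := by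
    have : C ⊆ minkQ ⁻¹' Set.Ici 0 :=
      closure_minimal (fun x hx => hQR x hx) (isClosed_Ici.preimage minkQ_continuous)
    exact fun x hx => this hx
  have hC0 : (0 : E) ∈ C := subset_closure hR0
  have hCadd : ∀ x ∈ C, ∀ y ∈ C, x + y ∈ C := by
    intro x hx y hy
    have hmaps : Set.MapsTo (fun p : E × E => p.1 + p.2) (R ×ˢ R) R := by
      rintro ⟨a, b⟩ ⟨ha, hb⟩
      exact hRadd a ha b hb
    have := hmaps.closure (continuous_fst.add continuous_snd)
    have hx' : (x, y) ∈ closure (R ×ˢ R) := by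
      rw [closure_prod_eq]
      exact ⟨hx, hy⟩
    exact this hx'
  have hCq : ∀ (q : ℚ), ∀ x ∈ C, (q : ℝ) • x ∈ C := by
    intro q x hx
    exact (Set.MapsTo.closure (hRq q) (continuous_const_smul _)) hx
  have hCsmul : ∀ (c : ℝ), ∀ x ∈ C, c • x ∈ C := by
    intro c x hx
    have hmaps : Set.MapsTo (fun t : ℝ => t • x) (Set.range ((↑) : ℚ → ℝ)) C := by
      rintro t ⟨q, rfl⟩
      exact hCq q x hx
    have h2 := hmaps.closure_left (continuous_id.smul continuous_const) isClosed_closure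
    have : c ∈ closure (Set.range ((↑) : ℚ → ℝ)) := by
      rw [Rat.denseRange_cast.closure_range]
      trivial
    exact h2 this
  -- C is an ℝ-submodule containing Λ, hence contains the span = ⊤.
  let Csub : Submodule ℝ E :=
    { carrier := C
      add_mem' := fun ha hb => hCadd _ ha _ hb
      zero_mem' := hC0
      smul_mem' := fun c x hx => hCsmul c x hx }
  have hle : Submodule.span ℝ (Λ : Set E) ≤ Csub :=
    Submodule.span_le.mpr (fun x hx => subset_closure (hRΛ hx))
  have hmem : (EuclideanSpace.single (3 : Fin 4) (1 : ℝ)) ∈ Csub := by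
    apply hle
    rw [htop]
    trivial
  have := hQC _ hmem
  have hval : minkQ (EuclideanSpace.single (3 : Fin 4) (1 : ℝ)) = -1 := by
    simp [minkQ, EuclideanSpace.single_apply]
  rw [hval] at this
  linarith

/-- A discrete additive subgroup of `ℝ⁴` all of whose nonzero
elements are spacelike for the Minkowski form is free abelian of rank `k ≤ 3`;
in particular it cannot have rank `4`. -/
theorem discrete_spacelike_subgroup_free_rank_le_three
    (Λ : AddSubgroup (EuclideanSpace ℝ (Fin 4)))
    (hdisc : DiscreteTopology Λ)
    (hspace : ∀ v ∈ Λ, v ≠ 0 → minkQ v > 0) :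
    ∃ k : ℕ, k ≤ 3 ∧ Nonempty (Λ ≃+ (Fin k → ℤ)) := by
  classical
  set E := EuclideanSpace ℝ (Fin 4)
  set L : Submodule ℤ E := Λ.toIntSubmodule with hLdef
  have hdiscL : DiscreteTopology L := hdisc
  -- restrict to the real span
  set E' : Submodule ℝ E := Submodule.span ℝ (L : Set E) with hE'
  let f : E' →ₗ[ℤ] E := (E'.subtype).restrictScalars ℤ
  have hfinj : Function.Injective f := Subtype.val_injective
  set L₀ : Submodule ℤ E' := L.comap f with hL₀
  have h_img : L₀.map f = L := by
    rw [hL₀, Submodule.map_comap_eq_self]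
    intro x hx
    exact LinearMap.mem_range.mpr ⟨⟨x, Submodule.subset_span hx⟩, rfl⟩
  have hdisc₀ : DiscreteTopology L₀ := by
    refine DiscreteTopology.preimage_of_continuous_injective (L : Set E) ?_
      (Submodule.injective_subtype _)
    exact LinearMap.continuous_of_finiteDimensional (E'.subtype)
  have hzl : IsZLattice ℝ L₀ := ⟨by
    rw [← (Submodule.map_injective_of_injective (Submodule.injective_subtype _)).eq_iff,
      Submodule.map_span, Submodule.map_top, Submodule.range_subtype]
    have : Submodule.subtype E' '' (L₀ : Set E') = (L : Set E) := by
      have := congrArg (fun S : Submodule ℤ E => (S : Set E)) h_img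
      simp only [Submodule.map_coe] at this
      exact this
    rw [this]⟩
  have hfree : Module.Free ℤ L₀ := ZLattice.module_free ℝ L₀
  have hfin : Module.Finite ℤ L₀ := ZLattice.module_finite ℝ L₀
  have hrank : Module.finrank ℤ L₀ = Module.finrank ℝ E' := ZLattice.rank ℝ L₀
  -- the rank bound
  have hne : E' ≠ ⊤ := by
    have : (L : Set E) = (Λ : Set E) := rfl
    rw [hE', this]
    exact span_ne_top Λ hspace
  have hklt : Module.finrank ℝ E' < 4 := by
    have h4 : Module.finrank ℝ E = 4 := finrank_euclideanSpace_fin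
    have := Submodule.finrank_lt hne
    omega
  set k := Module.finrank ℤ L₀ with hk
  refine ⟨k, by omega, ?_⟩
  -- build the equivalence
  let b := Module.Free.chooseBasis ℤ L₀
  have hcard : Fintype.card (Module.Free.ChooseBasisIndex ℤ L₀) = k :=
    (Module.finrank_eq_card_chooseBasisIndex ℤ L₀).symm
  let b' : Module.Basis (Fin k) ℤ L₀ := b.reindex (Fintype.equivFinOfCardEq hcard)
  let e₁ : L₀ ≃ₗ[ℤ] (Fin k → ℤ) := b'.equivFun
  -- Λ ≃+ L₀
  let e₂ : L₀ ≃ₗ[ℤ] L := (Submodule.equivMapOfInjective f hfinj L₀).trans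
    (LinearEquiv.ofEq _ _ h_img)
  let e₃ : Λ ≃+ L := AddEquiv.refl _
  exact ⟨(e₃.trans e₂.symm.toAddEquiv).trans e₁.toAddEquiv⟩
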